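/- (Proposition 2.B, bound.) Let A, A^D be real n×n matrices, B a real n×m matrix, K a real m×n matrix, F = A + B K, and let M be any real m'×n matrix. Let δû : ℕ → ℝᵐ with ‖δû(j)‖ ≤ ρ for all j, define δx̂(0) = 0, δx̂(j+1) = A^D δx̂(j) + B δû(j); δx(0) = 0, δx(j+1) = A δx(j) + B(δû(j) + K(δx(j) − δx̂(j))); and ε(j) = δx(j) − δx̂(j). Then for every j ≥ 0, ‖M ε(j)‖ ≤ Σ_{r=2}^{j} ‖M F^{j−r}(A − A^D)‖ · g(r−1), where g(r) := ρ · Σ_{s=1}^{r} ‖(A^D)^{r−s} B‖. -/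

import Mathlib

open Matrix Finset Filter Topology

/-- Operator norm of a real matrix, induced by the Euclidean norms on domain and codomain. -/
noncomputable def opN {α β : Type*} [Fintype α] [Fintype β] [DecidableEq β]
    (A : Matrix α β ℝ) : ℝ :=
  ‖LinearMap.toContinuousLinearMap (Matrix.toEuclideanLin A)‖

/-- A real matrix acting on Euclidean vectors. -/
noncomputable def appE {α β : Type*} [Fintype α] [Fintype β] [DecidableEq β]
    (A : Matrix α β ℝ) (v : EuclideanSpace ℝ β) : EuclideanSpace ℝ α :=
  Matrix.toEuclideanLin A v

lemma appE_mul {α β γ : Type*} [Fintype α] [Fintype β] [Fintype γ] [DecidableEq β] [DecidableEq γ]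
    (A : Matrix α β ℝ) (B : Matrix β γ ℝ) (v : EuclideanSpace ℝ γ) :
    appE (A * B) v = appE A (appE B v) := by
  simp [appE, Matrix.toEuclideanLin_apply, Matrix.mulVec_mulVec]

lemma appE_add {α β : Type*} [Fintype α] [Fintype β] [DecidableEq β]
    (A B : Matrix α β ℝ) (v : EuclideanSpace ℝ β) :
    appE (A + B) v = appE A v + appE B v := by
  simp [appE, map_add]

lemma appE_sub {α β : Type*} [Fintype α] [Fintype β] [DecidableEq β]
    (A B : Matrix α β ℝ) (v : EuclideanSpace ℝ β) :
    appE (A - B) v = appE A v - appE B v := by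
  simp [appE, map_sub]

lemma appE_one {α : Type*} [Fintype α] [DecidableEq α] (v : EuclideanSpace ℝ α) :
    appE (1 : Matrix α α ℝ) v = v := by
  simp [appE, Matrix.toEuclideanLin_apply]

lemma appE_zero_vec {α β : Type*} [Fintype α] [Fintype β] [DecidableEq β]
    (A : Matrix α β ℝ) : appE A (0 : EuclideanSpace ℝ β) = 0 := by
  simp [appE]

lemma appE_add_vec {α β : Type*} [Fintype α] [Fintype β] [DecidableEq β]
    (A : Matrix α β ℝ) (u v : EuclideanSpace ℝ β) : appE A (u + v) = appE A u + appE A v := by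
  simp [appE]

lemma appE_sub_vec {α β : Type*} [Fintype α] [Fintype β] [DecidableEq β]
    (A : Matrix α β ℝ) (u v : EuclideanSpace ℝ β) : appE A (u - v) = appE A u - appE A v := by
  simp [appE]

lemma norm_appE_le {α β : Type*} [Fintype α] [Fintype β] [DecidableEq β]
    (A : Matrix α β ℝ) (v : EuclideanSpace ℝ β) : ‖appE A v‖ ≤ opN A * ‖v‖ :=
  (LinearMap.toContinuousLinearMap (Matrix.toEuclideanLin A)).le_opNorm v

lemma opN_nonneg {α β : Type*} [Fintype α] [Fintype β] [DecidableEq β]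
    (A : Matrix α β ℝ) : 0 ≤ opN A := norm_nonneg _

set_option maxHeartbeats 1000000 in
/-- Proposition 2.B (bound): for any matrix `M`,
`‖M ε(j)‖ ≤ ∑_{r=2}^{j} ‖M F^{j-r}(A - A^D)‖ g(r-1)`. -/
theorem prop2B_bound {n m mp : ℕ} (A AD : Matrix (Fin n) (Fin n) ℝ)
    (B : Matrix (Fin n) (Fin m) ℝ) (K : Matrix (Fin m) (Fin n) ℝ)
    (F : Matrix (Fin n) (Fin n) ℝ) (hF : F = A + B * K)
    (M : Matrix (Fin mp) (Fin n) ℝ)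
    (ρ : ℝ) (du : ℕ → EuclideanSpace ℝ (Fin m)) (hdu : ∀ j, ‖du j‖ ≤ ρ)
    (dxh : ℕ → EuclideanSpace ℝ (Fin n)) (hdxh0 : dxh 0 = 0)
    (hdxh : ∀ j, dxh (j + 1) = appE AD (dxh j) + appE B (du j))
    (dx : ℕ → EuclideanSpace ℝ (Fin n)) (hdx0 : dx 0 = 0)
    (hdx : ∀ j, dx (j + 1) = appE A (dx j) + appE B (du j + appE K (dx j - dxh j)))
    (ε : ℕ → EuclideanSpace ℝ (Fin n)) (hε : ∀ j, ε j = dx j - dxh j)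
    (g : ℕ → ℝ) (hg : ∀ r, g r = ρ * ∑ s ∈ Finset.Icc 1 r, opN (AD ^ (r - s) * B)) :
    ∀ j, ‖appE M (ε j)‖ ≤
      ∑ r ∈ Finset.Icc 2 j, opN (M * F ^ (j - r) * (A - AD)) * g (r - 1) := by
  have hρ : 0 ≤ ρ := le_trans (norm_nonneg _) (hdu 0)
  -- recurrence for ε
  have εrec : ∀ j, ε (j + 1) = appE F (ε j) + appE (A - AD) (dxh j) := by
    intro j
    simp only [hε, hdx, hdxh, hF, appE_add_vec, appE_add, appE_mul, appE_sub, appE_sub_vec]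
    abel
  -- bound on ‖P · dxh j‖ for any matrix P
  have key : ∀ j (P : Matrix (Fin n) (Fin n) ℝ),
      ‖appE P (dxh j)‖ ≤ ρ * ∑ s ∈ Finset.Icc 1 j, opN (P * AD ^ (j - s) * B) := by
    intro j
    induction j with
    | zero => intro P; simp [hdxh0, appE_zero_vec]
    | succ j ih =>
      intro P
      rw [hdxh, appE_add_vec, ← appE_mul, ← appE_mul]
      have h1 := ih (P * AD)
      have h2 : ‖appE (P * B) (du j)‖ ≤ opN (P * B) * ρ :=
        (norm_appE_le _ _).trans (mul_le_mul_of_nonneg_left (hdu j) (opN_nonneg _))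
      have hsum : ∑ s ∈ Finset.Icc 1 (j + 1), opN (P * AD ^ (j + 1 - s) * B)
          = (∑ s ∈ Finset.Icc 1 j, opN (P * AD * AD ^ (j - s) * B)) + opN (P * B) := by
        rw [Finset.sum_Icc_succ_top (by omega : 1 ≤ j + 1)]
        rw [Finset.sum_congr rfl (fun s hs => ?_ :
          ∀ s ∈ Finset.Icc 1 j, opN (P * AD ^ (j + 1 - s) * B)
            = opN (P * AD * AD ^ (j - s) * B))]
        · rw [Nat.sub_self, pow_zero, mul_one]
        · have hsle : s ≤ j := (Finset.mem_Icc.mp hs).2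
          have h : j + 1 - s = (j - s) + 1 := by omega
          rw [h, pow_succ', mul_assoc P AD _]
      calc ‖appE (P * AD) (dxh j) + appE (P * B) (du j)‖
          ≤ ‖appE (P * AD) (dxh j)‖ + ‖appE (P * B) (du j)‖ := norm_add_le _ _
        _ ≤ ρ * ∑ s ∈ Finset.Icc 1 j, opN (P * AD * AD ^ (j - s) * B) + opN (P * B) * ρ := by
            linarith
        _ = ρ * ∑ s ∈ Finset.Icc 1 (j + 1), opN (P * AD ^ (j + 1 - s) * B) := by
            rw [hsum]; ring
  -- ‖dxh j‖ ≤ g j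
  have hdxhb : ∀ j, ‖dxh j‖ ≤ g j := by
    intro j
    have := key j 1
    rw [appE_one] at this
    refine this.trans ?_
    rw [hg]
    refine le_of_eq ?_
    congr 1
    exact Finset.sum_congr rfl fun s _ => by rw [one_mul]
  -- main induction, generalized over M
  have main : ∀ j (P : Matrix (Fin mp) (Fin n) ℝ), ‖appE P (ε j)‖ ≤
      ∑ r ∈ Finset.Icc 2 j, opN (P * F ^ (j - r) * (A - AD)) * g (r - 1) := by
    intro j
    induction j with
    | zero => intro P; simp [hε 0, hdx0, hdxh0, appE_zero_vec]
    | succ j ih =>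
      intro P
      rw [εrec j, appE_add_vec, ← appE_mul, ← appE_mul]
      have h1 := ih (P * F)
      have h2 : ‖appE (P * (A - AD)) (dxh j)‖ ≤ opN (P * (A - AD)) * g j :=
        (norm_appE_le _ _).trans (mul_le_mul_of_nonneg_left (hdxhb j) (opN_nonneg _))
      have hstep : ‖appE (P * F) (ε j) + appE (P * (A - AD)) (dxh j)‖
          ≤ (∑ r ∈ Finset.Icc 2 j, opN (P * F * F ^ (j - r) * (A - AD)) * g (r - 1))
            + opN (P * (A - AD)) * g j := by
        calc _ ≤ ‖appE (P * F) (ε j)‖ + ‖appE (P * (A - AD)) (dxh j)‖ := norm_add_le _ _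
          _ ≤ _ := by linarith
      rcases Nat.eq_zero_or_pos j with hj | hj
      · subst hj
        have h0 : ε 0 = 0 := by rw [hε, hdx0, hdxh0, sub_zero]
        rw [Finset.Icc_eq_empty (by omega : ¬ (2:ℕ) ≤ 0 + 1), Finset.sum_empty]
        simp [h0, hdxh0, appE_zero_vec]
      · have hsum : ∑ r ∈ Finset.Icc 2 (j + 1), opN (P * F ^ (j + 1 - r) * (A - AD)) * g (r - 1)
            = (∑ r ∈ Finset.Icc 2 j, opN (P * F * F ^ (j - r) * (A - AD)) * g (r - 1))
              + opN (P * (A - AD)) * g j := by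
          rw [Finset.sum_Icc_succ_top (by omega : 2 ≤ j + 1)]
          rw [Finset.sum_congr rfl (fun r hr => ?_ :
            ∀ r ∈ Finset.Icc 2 j, opN (P * F ^ (j + 1 - r) * (A - AD)) * g (r - 1)
              = opN (P * F * F ^ (j - r) * (A - AD)) * g (r - 1))]
          · rw [Nat.sub_self, pow_zero, Matrix.mul_one, Nat.add_sub_cancel]
          · have hrle : r ≤ j := (Finset.mem_Icc.mp hr).2
            have h : j + 1 - r = (j - r) + 1 := by omega
            rw [h, pow_succ', Matrix.mul_assoc P F _]
        rw [hsum]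
        exact hstep
  exact fun j => main j M
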